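/- Let A = [B | O] be the m×(n+ℓ) matrix obtained from a nonzero m×n matrix B by appending ℓ > 0 zero columns. Then A has the SSVP if and only if B has the SSVP and the rows of B are linearly independent. -/

import Mathlib

open Matrix

/-- The strong singular value property. -/
def HasSSVP {m n : Type*} [Fintype m] [Fintype n] (A : Matrix m n ℝ) : Prop :=
  ∀ X : Matrix m n ℝ,
    (X * Aᵀ).IsSymm → (Aᵀ * X).IsSymm → (∀ i j, A i j ≠ 0 → X i j = 0) → X = 0

theorem stmt_13 (m n l : ℕ) (hl : 0 < l) (B : Matrix (Fin m) (Fin n) ℝ) (hB : B ≠ 0) :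
    HasSSVP (Matrix.fromCols B (0 : Matrix (Fin m) (Fin l) ℝ)) ↔
      HasSSVP B ∧ LinearIndependent ℝ (fun i => B i) := by
  constructor
  · intro hA
    constructor
    · intro Y hs1 hs2 hsupp
      have h := hA (fromCols Y 0) ?_ ?_ ?_
      · ext i j
        have := congrFun (congrFun h i) (Sum.inl j)
        simpa using this
      · rw [transpose_fromCols, fromCols_mul_fromRows]
        simpa using hs1
      · rw [transpose_fromCols, fromRows_mul_fromCols]
        unfold Matrix.IsSymm
        rw [fromBlocks_transpose]
        simp [hs2.eq]
      · rintro i (j | j) hij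
        · exact hsupp i j (by simpa using hij)
        · simp
    · rw [Fintype.linearIndependent_iff]
      intro g hg i
      set Z : Matrix (Fin m) (Fin l) ℝ := fun i _ => g i with hZ
      have hBZ : Bᵀ * Z = 0 := by
        ext j k
        have := congrFun hg j
        simp only [Finset.sum_apply, Pi.smul_apply, smul_eq_mul, Pi.zero_apply] at this
        simp only [Matrix.mul_apply, Matrix.transpose_apply, hZ, Matrix.zero_apply]
        rw [← this]
        exact (Finset.sum_congr rfl fun x _ => mul_comm (B x j) (g x) : ∑ x, B x j * g x = ∑ x, g x * B x j)
      have h := hA (fromCols 0 Z) ?_ ?_ ?_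
      · have := congrFun (congrFun h i) (Sum.inr ⟨0, hl⟩)
        exact this
      · rw [transpose_fromCols, fromCols_mul_fromRows]
        simp [Matrix.IsSymm]
      · rw [transpose_fromCols, fromRows_mul_fromCols]
        simp [hBZ, Matrix.IsSymm]
      · rintro i (j | j) hij
        · simp
        · simp at hij
  · rintro ⟨hBs, hind⟩ X hs1 hs2 hsupp
    set Y := X.toCols₁ with hY
    set Z := X.toCols₂ with hZ
    have hX : X = fromCols Y Z := (fromCols_toCols X).symm
    rw [hX, transpose_fromCols] at hs1 hs2
    rw [fromCols_mul_fromRows] at hs1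
    rw [fromRows_mul_fromCols] at hs2
    have hBZ : Bᵀ * Z = 0 := by
      ext j k
      have := congrFun (congrFun hs2.eq (Sum.inl j)) (Sum.inr k)
      simpa using this.symm
    have hBYsymm : (Bᵀ * Y).IsSymm := by
      ext j j'
      have := congrFun (congrFun hs2.eq (Sum.inl j)) (Sum.inl j')
      simpa using this
    have hY0 : Y = 0 := by
      apply hBs Y (by simpa using hs1) hBYsymm
      intro i j hij
      have := hsupp i (Sum.inl j) (by simpa using hij)
      simpa [hX] using this
    have hZ0 : Z = 0 := by
      ext i k
      have := Fintype.linearIndependent_iff.mp hind (fun i => Z i k) ?_ i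
      · exact this
      · funext j
        have := congrFun (congrFun hBZ j) k
        simp only [Matrix.mul_apply, Matrix.transpose_apply, Matrix.zero_apply] at this
        simp only [Finset.sum_apply, Pi.smul_apply, smul_eq_mul, Pi.zero_apply]
        rw [← this]
        exact Finset.sum_congr rfl fun i _ => mul_comm _ _
    rw [hX, hY0, hZ0]
    ext i (j | j) <;> simp
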